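/- Let G be a group and N a normal subgroup of G with N abelian. Let k ∈ ℕ and f_1,…,f_k, g_1,…,g_k, a_1,…,a_k, b_1,…,b_k ∈ G such that f_i ≡ a_i mod N and g_i ≡ b_i mod N for all i. Then the element [f_1,g_1]⋯[f_k,g_k]·([a_1,b_1]⋯[a_k,b_k])⁻¹ lies in [G,N] and its mixed commutator length cl_{G,N} is at most 2k. -/

import Mathlib

open scoped commutatorElement

/-- The mixed commutator length `cl_{G,N}` (∞ if not a product of mixed commutators). -/
noncomputable def clGN {G : Type*} [Group G] (N : Subgroup G) (x : G) : ℕ∞ :=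
  sInf {n : ℕ∞ | ∃ k : ℕ, n = k ∧ ∃ g v : Fin k → G, (∀ i, v i ∈ N) ∧
    x = (List.ofFn fun i => ⁅g i, v i⁆).prod}

/-- The rank of a subgroup: minimal size of a generating set. -/
noncomputable def rk {G : Type*} [Group G] (H : Subgroup G) : ℕ∞ :=
  sInf {n : ℕ∞ | ∃ S : Finset G, Subgroup.closure (S : Set G) = H ∧ n = S.card}

/-- The intermediate rank `intrk^Γ(Λ) = inf {rk Θ | Λ ≤ Θ ≤ Γ}`. -/
noncomputable def intrk {G : Type*} [Group G] (Λ : Subgroup G) : ℕ∞ :=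
  sInf {n : ℕ∞ | ∃ Θ : Subgroup G, Λ ≤ Θ ∧ n = rk Θ}

/-- The general rank in the sense of Malcev. -/
noncomputable def genrk (G : Type*) [Group G] : ℕ∞ :=
  sSup {n : ℕ∞ | ∃ Λ : Subgroup G, Λ.FG ∧ n = intrk Λ}

/-- The special rank in the sense of Malcev. -/
noncomputable def sperk (G : Type*) [Group G] : ℕ∞ :=
  sSup {n : ℕ∞ | ∃ Λ : Subgroup G, Λ.FG ∧ n = rk Λ}

section Aux
variable {G : Type*} [Group G]

/-- conjugate of a product of commutators -/
lemma conjList (h : G) (L : List (G × G)) :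
    h * (L.map fun p => ⁅p.1, p.2⁆).prod * h⁻¹ =
      ((L.map fun p => (h * p.1 * h⁻¹, h * p.2 * h⁻¹)).map fun p => ⁅p.1, p.2⁆).prod := by
  induction L with
  | nil => simp
  | cons p L ih =>
    simp only [List.map_cons, List.prod_cons]
    rw [← ih]
    group

lemma stepLemma (N : Subgroup G) [N.Normal]
    (habel : ∀ a b : G, a ∈ N → b ∈ N → a * b = b * a)
    (u v a b : G) (hu : u ∈ N) (hv : v ∈ N) :
    ⁅u * a, v * b⁆ =
      ⁅a * ⁅a, b⁆⁻¹, ⁅a, b⁆ * v * ⁅a, b⁆⁻¹⁆ *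
        ⁅(a * b * a⁻¹)⁻¹, (a * b * a⁻¹) * u * (a * b * a⁻¹)⁻¹⁆ * ⁅a, b⁆ := by
  set c := ⁅a, b⁆ with hc
  set h := a * b * a⁻¹ with hh
  have hav : a * v * a⁻¹ ∈ N := Subgroup.Normal.conj_mem ‹N.Normal› v hv a
  have hw : h * u⁻¹ * h⁻¹ ∈ N := Subgroup.Normal.conj_mem ‹N.Normal› u⁻¹ (inv_mem hu) h
  have hz : c * v⁻¹ * c⁻¹ ∈ N := Subgroup.Normal.conj_mem ‹N.Normal› v⁻¹ (inv_mem hv) c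
  have e1 : ⁅a * c⁻¹, c * v * c⁻¹⁆ = (a * v * a⁻¹) * (c * v⁻¹ * c⁻¹) := by
    rw [hc]; group
  have e2 : ⁅h⁻¹, h * u * h⁻¹⁆ = u * (h * u⁻¹ * h⁻¹) := by
    rw [hh]; group
  have eL : ⁅u * a, v * b⁆ =
      u * (a * v * a⁻¹) * (h * u⁻¹ * h⁻¹) * (c * v⁻¹ * c⁻¹) * c := by
    rw [hc, hh]; group
  rw [eL, e1, e2]
  have c1 : u * (a * v * a⁻¹) = (a * v * a⁻¹) * u := habel _ _ hu hav
  have c2 : u * (c * v⁻¹ * c⁻¹) = (c * v⁻¹ * c⁻¹) * u := habel _ _ hu hz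
  have c3 : (h * u⁻¹ * h⁻¹) * (c * v⁻¹ * c⁻¹) = (c * v⁻¹ * c⁻¹) * (h * u⁻¹ * h⁻¹) :=
    habel _ _ hw hz
  calc u * (a * v * a⁻¹) * (h * u⁻¹ * h⁻¹) * (c * v⁻¹ * c⁻¹) * c
      = u * (a * v * a⁻¹) * ((h * u⁻¹ * h⁻¹) * (c * v⁻¹ * c⁻¹)) * c := by
        simp [mul_assoc]
    _ = u * (a * v * a⁻¹) * ((c * v⁻¹ * c⁻¹) * (h * u⁻¹ * h⁻¹)) * c := by rw [c3]
    _ = (a * v * a⁻¹) * (u * (c * v⁻¹ * c⁻¹)) * (h * u⁻¹ * h⁻¹) * c := by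
        rw [← mul_assoc, c1]; simp [mul_assoc]
    _ = (a * v * a⁻¹) * ((c * v⁻¹ * c⁻¹) * u) * (h * u⁻¹ * h⁻¹) * c := by rw [c2]
    _ = (a * v * a⁻¹) * (c * v⁻¹ * c⁻¹) * (u * (h * u⁻¹ * h⁻¹)) * c := by
        simp [mul_assoc]

lemma listLemma (N : Subgroup G) [N.Normal]
    (habel : ∀ a b : G, a ∈ N → b ∈ N → a * b = b * a) :
    ∀ (k : ℕ) (f g a b : Fin k → G),
      (∀ i, f i * (a i)⁻¹ ∈ N) → (∀ i, g i * (b i)⁻¹ ∈ N) →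
      ∃ L : List (G × G), L.length = 2 * k ∧ (∀ p ∈ L, p.2 ∈ N) ∧
        (List.ofFn fun i => ⁅f i, g i⁆).prod =
          (L.map fun p => ⁅p.1, p.2⁆).prod * (List.ofFn fun i => ⁅a i, b i⁆).prod := by
  intro k
  induction k with
  | zero => intro f g a b _ _; exact ⟨[], by simp, by simp, by simp⟩
  | succ k ih =>
    intro f g a b hf hg
    obtain ⟨L, hlen, hmem, heq⟩ := ih (fun i => f i.succ) (fun i => g i.succ)
      (fun i => a i.succ) (fun i => b i.succ) (fun i => hf i.succ) (fun i => hg i.succ)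
    set c := ⁅a 0, b 0⁆ with hc
    set h := a 0 * b 0 * (a 0)⁻¹ with hh
    refine ⟨(a 0 * c⁻¹, c * (g 0 * (b 0)⁻¹) * c⁻¹) ::
        (h⁻¹, h * (f 0 * (a 0)⁻¹) * h⁻¹) ::
        L.map (fun p => (c * p.1 * c⁻¹, c * p.2 * c⁻¹)), ?_, ?_, ?_⟩
    · simp [hlen]; ring
    · rintro p hp
      simp only [List.mem_cons] at hp
      rcases hp with rfl | rfl | hp
      · exact Subgroup.Normal.conj_mem ‹N.Normal› _ (hg 0) c
      · exact Subgroup.Normal.conj_mem ‹N.Normal› _ (hf 0) h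
      · obtain ⟨q, hq, rfl⟩ := List.mem_map.mp hp
        exact Subgroup.Normal.conj_mem ‹N.Normal› _ (hmem q hq) c
    · rw [List.ofFn_succ, List.ofFn_succ (f := fun i => ⁅a i, b i⁆), List.prod_cons,
        List.prod_cons, heq]
      have key : ⁅f 0, g 0⁆ = ⁅a 0 * c⁻¹, c * (g 0 * (b 0)⁻¹) * c⁻¹⁆ *
          ⁅h⁻¹, h * (f 0 * (a 0)⁻¹) * h⁻¹⁆ * c := by
        have := stepLemma N habel (f 0 * (a 0)⁻¹) (g 0 * (b 0)⁻¹) (a 0) (b 0)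
          (hf 0) (hg 0)
        simpa [hc, hh] using this
      rw [key]
      have conj := conjList c L
      simp only [List.map_cons, List.prod_cons]
      rw [← conj, hc]
      group
end Aux

/-- key lemma on replacing commutators modulo an abelian normal subgroup. -/
theorem clGN_prod_commutators_le {G : Type*} [Group G] (N : Subgroup G) [N.Normal]
    (habel : ∀ a b : G, a ∈ N → b ∈ N → a * b = b * a)
    (k : ℕ) (f g a b : Fin k → G)
    (hf : ∀ i, f i * (a i)⁻¹ ∈ N) (hg : ∀ i, g i * (b i)⁻¹ ∈ N) :
    (List.ofFn fun i => ⁅f i, g i⁆).prod * ((List.ofFn fun i => ⁅a i, b i⁆).prod)⁻¹ ∈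
      ⁅(⊤ : Subgroup G), N⁆ ∧
    clGN N ((List.ofFn fun i => ⁅f i, g i⁆).prod *
      ((List.ofFn fun i => ⁅a i, b i⁆).prod)⁻¹) ≤ 2 * k := by
  obtain ⟨L, hlen, hmem, heq⟩ := listLemma N habel k f g a b hf hg
  have hx : (List.ofFn fun i => ⁅f i, g i⁆).prod *
      ((List.ofFn fun i => ⁅a i, b i⁆).prod)⁻¹ = (L.map fun p => ⁅p.1, p.2⁆).prod := by
    rw [heq]; group
  rw [hx]
  constructor
  · refine list_prod_mem fun y hy => ?_
    obtain ⟨p, hp, rfl⟩ := List.mem_map.mp hy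
    exact Subgroup.commutator_mem_commutator (Subgroup.mem_top _) (hmem p hp)
  · refine sInf_le ⟨L.length, by rw [hlen]; push_cast; ring,
      fun i => (L.get i).1, fun i => (L.get i).2, fun i => hmem _ (L.get_mem i), ?_⟩
    conv_lhs => rw [← List.ofFn_get L]
    rw [List.map_ofFn]
    rfl
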